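/- Let X be a smooth cubic surface over a field k, obtained as the blow-up of P² along a k-line L' and a Galois orbit R₁,…,R₅ of 5 pairwise skew lines defined over a degree 5 cyclic extension (together forming a six of pairwise skew lines). Let λ₀ ∈ Pic(X) be the pullback of a line in P². Then the strict transform of the conic through the 5 blown-up points corresponding to the Rᵢ is a k-line on X with class 2λ₀ - (R₁ + ⋯ + R₅), and consequently 2λ₀ ∈ Δ. -/

import Mathlib

/-!
Model: the Picard group of a smooth cubic surface over a separably closed
field is identified with `ℤ⁷ = Fin 7 → ℤ` with its standard basis
`λ₀, L₁, …, L₆` (pullback of a line and the six exceptional classes),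
intersection form `picInter`, canonical class `KX = -3λ₀ + L₁ + ⋯ + L₆`.
The classes of the 27 lines are exactly the classes `l` with
`l·l = -1` and `KX·l = -1`.
-/

def picInter (a b : Fin 7 → ℤ) : ℤ := a 0 * b 0 - ∑ i : Fin 6, a i.succ * b i.succ

def KX : Fin 7 → ℤ := ![-3, 1, 1, 1, 1, 1, 1]

def IsLineClass (l : Fin 7 → ℤ) : Prop := picInter l l = -1 ∧ picInter KX l = -1

/-!
Galois model: for a smooth cubic surface `X` over a field `k`, split by a
finite Galois extension with group `G`, the Galois action on the geometric
Picard group is a homomorphism `ρ : G →* AddAut (Fin 7 → ℤ)` preserving the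
intersection form, the canonical class and the set of line classes.
`Pic(X)` is identified with the fixed subgroup `fixedSubgroup ρ`, and the
subgroup `Δ ⊆ Pic(X)` generated by norms (from finite separable extensions)
of lines is `Delta ρ`: the subgroup generated by the Galois-orbit sums
(= norms from the field of definition) of the 27 line classes.
-/

/-- The multiplicative group structure that older Mathlib put on `AddAut A`
(`mul g h = h.trans g`); current Mathlib makes `AddAut A` an additive group instead. -/
instance addAutGroupOld (A : Type*) [Add A] : Group (AddAut A) where
  mul g h := AddEquiv.trans h g
  one := AddEquiv.refl _
  inv := AddEquiv.symm
  mul_assoc _ _ _ := rfl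
  one_mul _ := rfl
  mul_one _ := rfl
  inv_mul_cancel := AddEquiv.self_trans_symm

variable {G : Type*} [Group G] [Fintype G]

noncomputable def normOrbit (ρ : G →* AddAut (Fin 7 → ℤ)) (l : Fin 7 → ℤ) : Fin 7 → ℤ :=
  ∑ m ∈ Finset.image (fun g => ρ g l) Finset.univ, m

noncomputable def Delta (ρ : G →* AddAut (Fin 7 → ℤ)) : AddSubgroup (Fin 7 → ℤ) :=
  AddSubgroup.closure { x | ∃ l, IsLineClass l ∧ x = normOrbit ρ l }

def fixedSubgroup (ρ : G →* AddAut (Fin 7 → ℤ)) : AddSubgroup (Fin 7 → ℤ) where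
  carrier := {x | ∀ g, ρ g x = x}
  zero_mem' := fun g => map_zero (ρ g)
  add_mem' := fun {a b} ha hb g => by rw [map_add, ha g, hb g]
  neg_mem' := fun {a} ha g => by rw [map_neg, ha g]

/-- Let `X` be the blow-up of `ℙ²` in a rational point (exceptional line
`L' = e₁`) and a Galois orbit of 5 points (exceptional lines
`R₁, …, R₅ = e₂, …, e₆`) defined over a degree 5 cyclic extension, the six
exceptional curves being pairwise skew.  Then the strict transform of the
conic through the 5 conjugate points is a `k`-line with class
`2λ₀ - (R₁ + ⋯ + R₅)`, and consequently `2λ₀ ∈ Δ`. -/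
theorem stmt16
    (ρ : G →* AddAut (Fin 7 → ℤ))
    (hlines : ∀ (g : G) (l : Fin 7 → ℤ), IsLineClass l → IsLineClass (ρ g l))
    (hint : ∀ (g : G) (a b : Fin 7 → ℤ), picInter (ρ g a) (ρ g b) = picInter a b)
    (hK : ∀ g : G, ρ g KX = KX)
    (R : Fin 5 → Fin 7 → ℤ)
    (hR : ∀ i : Fin 5, R i = Pi.single (⟨i.1 + 2, by omega⟩ : Fin 7) 1)
    (hlam : ∀ g : G, ρ g (Pi.single 0 1) = Pi.single 0 1)
    (hL' : ∀ g : G, ρ g (Pi.single 1 1) = Pi.single 1 1)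
    (hperm : ∀ (g : G) (i : Fin 5), ∃ j : Fin 5, ρ g (R i) = R j)
    (horbit : Finset.image (fun g : G => ρ g (R 0)) Finset.univ =
      Finset.image R Finset.univ) :
    IsLineClass ((2 : ℤ) • Pi.single 0 1 - ∑ i, R i) ∧
      (∀ g : G, ρ g ((2 : ℤ) • Pi.single 0 1 - ∑ i, R i) =
        (2 : ℤ) • Pi.single 0 1 - ∑ i, R i) ∧
      ((2 : ℤ) • Pi.single 0 1 - ∑ i, R i) ∈ Delta ρ ∧
      ((2 : ℤ) • (Pi.single 0 1 : Fin 7 → ℤ)) ∈ Delta ρ := by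
  -- R is injective
  have hRinj : Function.Injective R := by
    intro i j hij
    by_contra hne
    have h2 : (⟨i.1 + 2, by omega⟩ : Fin 7) ≠ ⟨j.1 + 2, by omega⟩ := by
      simp only [ne_eq, Fin.mk.injEq]
      omega
    have := congrFun hij (⟨i.1 + 2, by omega⟩ : Fin 7)
    rw [hR i, hR j, Pi.single_eq_same, Pi.single_eq_of_ne h2] at this
    exact one_ne_zero this
  -- fixedness of the orbit sum
  have hsum : ∀ g : G, ρ g (∑ i, R i) = ∑ i, R i := by
    intro g
    choose σ hσ using hperm g
    have hσinj : Function.Injective σ := by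
      intro i j h
      apply hRinj
      apply (ρ g).injective
      rw [hσ i, hσ j, h]
    rw [map_sum]
    calc ∑ i, ρ g (R i) = ∑ i, R (σ i) := by simp [hσ]
      _ = ∑ i, R i :=
        Fintype.sum_bijective σ (Finite.injective_iff_bijective.mp hσinj)
          (fun i => R (σ i)) R (fun i => rfl)
  set C := (2 : ℤ) • (Pi.single 0 1 : Fin 7 → ℤ) - ∑ i, R i with hCdef
  have hCval : C = ![2, 0, -1, -1, -1, -1, -1] := by
    funext x
    simp only [hCdef, Pi.sub_apply, Pi.smul_apply, Finset.sum_apply, Fin.sum_univ_five, hR]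
    fin_cases x <;> simp [Pi.single_apply] <;> decide
  have hCline : IsLineClass C := by
    rw [hCval]
    constructor <;> decide
  have hfix : ∀ g : G, ρ g C = C := by
    intro g
    rw [hCdef, map_sub, map_zsmul, hlam, hsum]
  have hCnorm : normOrbit ρ C = C := by
    unfold normOrbit
    have himg : Finset.image (fun g : G => ρ g C) Finset.univ = {C} := by
      rw [Finset.image_congr (g := fun _ => C) (fun g _ => hfix g),
        Finset.image_const Finset.univ_nonempty]
    rw [himg, Finset.sum_singleton]
  have hCmem : C ∈ Delta ρ :=
    AddSubgroup.subset_closure ⟨C, hCline, hCnorm.symm⟩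
  have hRnorm : normOrbit ρ (R 0) = ∑ i, R i := by
    unfold normOrbit
    rw [horbit, Finset.sum_image (fun i _ j _ h => hRinj h)]
  have hR0line : IsLineClass (R 0) := by
    rw [hR 0]
    constructor <;> (simp [picInter, IsLineClass, KX, Fin.sum_univ_six, Pi.single_apply] <;> decide)
  have hRmem : (∑ i, R i) ∈ Delta ρ :=
    AddSubgroup.subset_closure ⟨R 0, hR0line, hRnorm.symm⟩
  refine ⟨hCline, hfix, hCmem, ?_⟩
  have h2 : (2 : ℤ) • (Pi.single 0 1 : Fin 7 → ℤ) = C + ∑ i, R i := by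
    rw [hCdef, sub_add_cancel]
  rw [h2]
  exact AddSubgroup.add_mem _ hCmem hRmem
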